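/- (Difference estimate for the truncated generators.) For all integers m ≥ n ≥ 1, every y ∈ ℝ with |y| ≤ r, and every z ∈ ℝ^d, one has |f_m(y,z) − f_n(y,z)| ≤ 2λ‖z‖·1_{{‖z‖ > n}} + 2λ‖z‖·1_{{π_{r+1} > n}} + 2π_{r+1}·1_{{π_{r+1} > n}}. -/

import Mathlib

/-- The truncation `q_n(z) = z · n/(‖z‖ ∨ n)`. -/
noncomputable def trunc {d : ℕ} (n : ℕ) (z : EuclideanSpace ℝ (Fin d)) :
    EuclideanSpace ℝ (Fin d) :=
  ((n : ℝ) / max ‖z‖ (n : ℝ)) • z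

lemma trunc_eq_self {d : ℕ} {n : ℕ} (hn : 0 < (n:ℝ)) {z : EuclideanSpace ℝ (Fin d)}
    (hz : ‖z‖ ≤ (n:ℝ)) : trunc n z = z := by
  unfold trunc
  rw [max_eq_right hz, div_self hn.ne', one_smul]

lemma norm_trunc_le {d : ℕ} (n : ℕ) (z : EuclideanSpace ℝ (Fin d)) :
    ‖trunc n z‖ ≤ ‖z‖ := by
  unfold trunc
  rw [norm_smul]
  have hc : |(n : ℝ) / max ‖z‖ (n:ℝ)| ≤ 1 := by
    rcases le_or_gt ‖z‖ (n:ℝ) with h | h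
    · rcases eq_or_lt_of_le (Nat.cast_nonneg n : (0:ℝ) ≤ n) with h0 | h0
      · simp [← h0]
      · rw [max_eq_right h, div_self h0.ne']; simp
    · have hz0 : (0:ℝ) < ‖z‖ := lt_of_le_of_lt (Nat.cast_nonneg n) h
      rw [max_eq_left h.le, abs_of_nonneg (by positivity)]
      exact div_le_one_of_le₀ h.le hz0.le
  calc |(n : ℝ) / max ‖z‖ (n:ℝ)| * ‖z‖ ≤ 1 * ‖z‖ :=
        mul_le_mul_of_nonneg_right hc (norm_nonneg z)
    _ = ‖z‖ := one_mul _

/-- difference estimate for the truncated generators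
`f_n(y,z) = (f(y, q_n(z)) − f(0,0))·n/(π_{r+1} ∨ n) + f(0,0)`, where
`π_{r+1} = sup_{|y| ≤ r+1} |f(y,0) − f(0,0)|` is finite: for `m ≥ n ≥ 1` and
`|y| ≤ r`,
`|f_m(y,z) − f_n(y,z)| ≤ 2λ‖z‖·1_{‖z‖>n} + 2λ‖z‖·1_{π_{r+1}>n} + 2π_{r+1}·1_{π_{r+1}>n}`. -/
theorem truncated_generator_difference_estimate
    (d : ℕ) (l r : ℝ) (hl : 0 ≤ l) (hr : 0 ≤ r)
    (f : ℝ → EuclideanSpace ℝ (Fin d) → ℝ)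
    (hLip : ∀ y z z', |f y z - f y z'| ≤ l * ‖z - z'‖)
    (π : ℝ)
    (hπ : IsLUB {a : ℝ | ∃ y : ℝ, |y| ≤ r + 1 ∧ a = |f y 0 - f 0 0|} π) :
    ∀ m n : ℕ, 1 ≤ n → n ≤ m → ∀ y : ℝ, |y| ≤ r →
      ∀ z : EuclideanSpace ℝ (Fin d),
        |((f y (trunc m z) - f 0 0) * ((m : ℝ) / max π (m : ℝ)) + f 0 0) -
            ((f y (trunc n z) - f 0 0) * ((n : ℝ) / max π (n : ℝ)) + f 0 0)| ≤
          2 * l * ‖z‖ * (if (n : ℝ) < ‖z‖ then 1 else 0) +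
            2 * l * ‖z‖ * (if (n : ℝ) < π then 1 else 0) +
            2 * π * (if (n : ℝ) < π then 1 else 0) := by
  intro m n hn hnm y hy z
  have hn0 : (0:ℝ) < (n:ℝ) := by exact_mod_cast hn
  have hnm' : (n:ℝ) ≤ (m:ℝ) := by exact_mod_cast hnm
  have hm0 : (0:ℝ) < (m:ℝ) := lt_of_lt_of_le hn0 hnm'
  have hfyπ : |f y 0 - f 0 0| ≤ π := hπ.1 ⟨y, by linarith, rfl⟩
  have hπ0 : 0 ≤ π := le_trans (abs_nonneg _) hfyπ
  set cm : ℝ := (m : ℝ) / max π (m:ℝ) with hcm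
  set cn : ℝ := (n : ℝ) / max π (n:ℝ) with hcn
  have hcm0 : 0 ≤ cm := by positivity
  have hcm1 : cm ≤ 1 := div_le_one_of_le₀ (le_max_right _ _)
    (le_trans hm0.le (le_max_right _ _))
  have hcn0 : 0 ≤ cn := by positivity
  have hcn1 : cn ≤ 1 := div_le_one_of_le₀ (le_max_right _ _)
    (le_trans hn0.le (le_max_right _ _))
  set A : ℝ := f y (trunc m z) - f 0 0
  set B : ℝ := f y (trunc n z) - f 0 0
  -- bound on B
  have hB : |B| ≤ l * ‖z‖ + π := by
    have h1 : |f y (trunc n z) - f y 0| ≤ l * ‖trunc n z‖ := by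
      simpa using hLip y (trunc n z) 0
    have h2 : l * ‖trunc n z‖ ≤ l * ‖z‖ :=
      mul_le_mul_of_nonneg_left (norm_trunc_le n z) hl
    calc |B| = |(f y (trunc n z) - f y 0) + (f y 0 - f 0 0)| := by ring_nf; rfl
      _ ≤ |f y (trunc n z) - f y 0| + |f y 0 - f 0 0| := abs_add_le _ _
      _ ≤ l * ‖z‖ + π := add_le_add (le_trans h1 h2) hfyπ
  -- bound on A - B
  have hAB : |A - B| ≤ 2 * l * ‖z‖ * (if (n:ℝ) < ‖z‖ then 1 else 0) := by
    split_ifs with h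
    · have h1 : |A - B| ≤ l * ‖trunc m z - trunc n z‖ := by
        have : A - B = f y (trunc m z) - f y (trunc n z) := by ring
        rw [this]; exact hLip y _ _
      have h2 : ‖trunc m z - trunc n z‖ ≤ 2 * ‖z‖ := by
        calc ‖trunc m z - trunc n z‖ ≤ ‖trunc m z‖ + ‖trunc n z‖ := norm_sub_le _ _
          _ ≤ ‖z‖ + ‖z‖ := add_le_add (norm_trunc_le m z) (norm_trunc_le n z)
          _ = 2 * ‖z‖ := by ring
      calc |A - B| ≤ l * ‖trunc m z - trunc n z‖ := h1
        _ ≤ l * (2 * ‖z‖) := mul_le_mul_of_nonneg_left h2 hl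
        _ = 2 * l * ‖z‖ * 1 := by ring
    · push_neg at h
      have hzn : trunc n z = z := trunc_eq_self hn0 h
      have hzm : trunc m z = z := trunc_eq_self hm0 (le_trans h hnm')
      simp [A, B, hzn, hzm]
  -- bound on cm - cn
  have hC : |cm - cn| ≤ (if (n:ℝ) < π then 1 else 0) := by
    split_ifs with h
    · rw [abs_le]; constructor <;> linarith
    · push_neg at h
      have h1 : cn = 1 := by
        rw [hcn, max_eq_right h, div_self hn0.ne']
      have h2 : cm = 1 := by
        rw [hcm, max_eq_right (le_trans h hnm'), div_self hm0.ne']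
      simp [h1, h2]
  have key : |A * cm + f 0 0 - (B * cn + f 0 0)| ≤
      |A - B| * cm + |B| * |cm - cn| := by
    have heq : A * cm + f 0 0 - (B * cn + f 0 0) = (A - B) * cm + B * (cm - cn) := by
      ring
    rw [heq]
    calc |(A - B) * cm + B * (cm - cn)| ≤ |(A - B) * cm| + |B * (cm - cn)| := abs_add_le _ _
      _ = |A - B| * |cm| + |B| * |cm - cn| := by rw [abs_mul, abs_mul]
      _ = |A - B| * cm + |B| * |cm - cn| := by rw [abs_of_nonneg hcm0]
  have hz0 : (0:ℝ) ≤ ‖z‖ := norm_nonneg z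
  have hind : (0:ℝ) ≤ (if (n:ℝ) < π then 1 else 0) := by positivity
  calc |A * cm + f 0 0 - (B * cn + f 0 0)| ≤ |A - B| * cm + |B| * |cm - cn| := key
    _ ≤ |A - B| * 1 + (l * ‖z‖ + π) * (if (n:ℝ) < π then 1 else 0) := by
        gcongr
    _ ≤ 2 * l * ‖z‖ * (if (n:ℝ) < ‖z‖ then 1 else 0) +
          (l * ‖z‖ + π) * (if (n:ℝ) < π then 1 else 0) := by
        rw [mul_one]; gcongr
    _ ≤ 2 * l * ‖z‖ * (if (n:ℝ) < ‖z‖ then 1 else 0) +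
          2 * l * ‖z‖ * (if (n:ℝ) < π then 1 else 0) +
          2 * π * (if (n:ℝ) < π then 1 else 0) := by
        have h1 : (l * ‖z‖ + π) * (if (n:ℝ) < π then 1 else 0) ≤
            2 * l * ‖z‖ * (if (n:ℝ) < π then 1 else 0) +
            2 * π * (if (n:ℝ) < π then 1 else 0) := by
          have : l * ‖z‖ + π ≤ 2 * l * ‖z‖ + 2 * π := by nlinarith
          nlinarith [mul_le_mul_of_nonneg_right this hind]
        linarith
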